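/- Let a ∈ (0,1), f₁ : [0,a] → [0,1] a C¹ expanding diffeomorphism with f₁(0)=0, f₁(a)=1, and let f₂ : [a,1] → [0,1] be a C¹ solution of f₂'(x) = f₁'(f₁⁻¹(f₂(x)))/(f₁'(f₁⁻¹(f₂(x))) − 1), f₂(a) = 0, such that the resulting two-branch map preserves Lebesgue measure. Then f₂(1) = 1. -/
import Mathlib


open MeasureTheory Set

/-- If `f₂` solves the transfer-operator ODE with `f₂ a = 0`, takes values
in `[0,1]`, and the resulting two-branch map preserves Lebesgue measure, then `f₂ 1 = 1`. -/
theorem stmt6 (a : ℝ) (ha : a ∈ Ioo (0:ℝ) 1)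
    (f₁ f₁' g₁ f₂ f₂' : ℝ → ℝ)
    (hf₁d : ∀ x ∈ Icc (0:ℝ) a, HasDerivWithinAt f₁ (f₁' x) (Icc 0 a) x)
    (hf₁e : ∀ x ∈ Icc (0:ℝ) a, 1 < f₁' x)
    (hf₁0 : f₁ 0 = 0) (hf₁a : f₁ a = 1)
    (hg₁ : ∀ x ∈ Icc (0:ℝ) a, g₁ (f₁ x) = x)
    (hg₁' : ∀ y ∈ Icc (0:ℝ) 1, g₁ y ∈ Icc 0 a ∧ f₁ (g₁ y) = y)
    (hf₂d : ∀ x ∈ Icc a (1:ℝ), HasDerivWithinAt f₂ (f₂' x) (Icc a 1) x)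
    (hf₂a : f₂ a = 0)
    (hf₂mem : ∀ x ∈ Icc a (1:ℝ), f₂ x ∈ Icc (0:ℝ) 1)
    (hODE : ∀ x ∈ Icc a (1:ℝ),
      f₂' x = f₁' (g₁ (f₂ x)) / (f₁' (g₁ (f₂ x)) - 1))
    (hpres : Measure.map (fun x => if x < a then f₁ x else f₂ x)
        (volume.restrict (Icc (0:ℝ) 1)) = volume.restrict (Icc (0:ℝ) 1)) :
    f₂ 1 = 1 := by

  obtain ⟨ha0, ha1⟩ := ha
  -- strict monotonicity facts on [0,a]
  have hIcc : interior (Icc (0:ℝ) a) = Ioo 0 a := interior_Icc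
  have hf₁c : ContinuousOn f₁ (Icc 0 a) := fun x hx => (hf₁d x hx).continuousWithinAt
  have hmono₁ : StrictMonoOn f₁ (Icc 0 a) := by
    apply strictMonoOn_of_hasDerivWithinAt_pos (convex_Icc 0 a) hf₁c
      (f' := f₁')
    · intro x hx
      exact (hf₁d x (interior_subset hx)).mono interior_subset
    · intro x hx
      exact lt_trans zero_lt_one (hf₁e x (interior_subset hx))
  have hmonoh : StrictMonoOn (fun x => f₁ x - x) (Icc 0 a) := by
    apply strictMonoOn_of_hasDerivWithinAt_pos (convex_Icc 0 a)
      (hf₁c.sub continuousOn_id) (f' := fun x => f₁' x - 1)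
    · intro x hx
      exact ((hf₁d x (interior_subset hx)).mono interior_subset).sub
        (hasDerivWithinAt_id x _)
    · intro x hx
      simpa using hf₁e x (interior_subset hx)
  -- f₂ is monotone on [a,1]
  have hf₂c : ContinuousOn f₂ (Icc a 1) := fun x hx => (hf₂d x hx).continuousWithinAt
  have hmono₂ : MonotoneOn f₂ (Icc a 1) := by
    apply (strictMonoOn_of_hasDerivWithinAt_pos (convex_Icc a 1) hf₂c
      (f' := f₂') ?_ ?_).monotoneOn
    · intro x hx
      exact (hf₂d x (interior_subset hx)).mono interior_subset
    · intro x hx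
      have hx' := interior_subset hx
      rw [hODE x hx']
      have h1 : 1 < f₁' (g₁ (f₂ x)) := hf₁e _ (hg₁' (f₂ x) (hf₂mem x hx')).1
      exact div_pos (lt_trans zero_lt_one h1) (by linarith)
  by_contra hne
  set b := f₂ 1 with hbdef
  have hbmem : b ∈ Icc (0:ℝ) 1 := hf₂mem 1 ⟨ha1.le, le_refl 1⟩
  have hb : b < 1 := lt_of_le_of_ne hbmem.2 hne
  obtain ⟨hgmem, hgf⟩ := hg₁' b hbmem
  have hga : g₁ b < a := by
    rcases lt_or_eq_of_le hgmem.2 with h | h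
    · exact h
    · exfalso; rw [h] at hgf; rw [hf₁a] at hgf; exact hne hgf.symm
  -- key strict inequality: a - g₁ b < 1 - b
  have hkey : a - g₁ b < 1 - b := by
    have := hmonoh hgmem ⟨ha0.le, le_refl a⟩ hga
    simp only [hgf, hf₁a] at this
    linarith
  -- measurability of T from hpres
  set T := fun x => if x < a then f₁ x else f₂ x with hTdef
  have hTmeas : AEMeasurable T (volume.restrict (Icc (0:ℝ) 1)) := by
    by_contra h
    rw [Measure.map_of_not_aemeasurable h] at hpres
    have := congrArg (fun μ : Measure ℝ => μ (Icc (0:ℝ) 1)) hpres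
    simp [Measure.restrict_apply, Real.volume_Icc, ha1.le] at this
  -- compute the preimage of Ioc b 1
  have hset : T ⁻¹' (Ioc b 1) ∩ Icc 0 1 = Ioo (g₁ b) a := by
    ext x
    simp only [mem_inter_iff, mem_preimage, mem_Ioc, mem_Icc, mem_Ioo, hTdef]
    constructor
    · rintro ⟨⟨h1, h2⟩, hx0, hx1⟩
      by_cases hxa : x < a
      · rw [if_pos hxa] at h1
        refine ⟨?_, hxa⟩
        by_contra hle
        push_neg at hle
        have : f₁ x ≤ f₁ (g₁ b) :=
          hmono₁.monotoneOn ⟨hx0, hxa.le⟩ hgmem hle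
        rw [hgf] at this; linarith
      · rw [if_neg hxa] at h1
        push_neg at hxa
        have : f₂ x ≤ b := hmono₂ ⟨hxa, hx1⟩ ⟨ha1.le, le_refl 1⟩ hx1
        linarith
    · rintro ⟨h1, h2⟩
      have hx0 : 0 ≤ x := le_trans hgmem.1 h1.le
      have hx1 : x ≤ 1 := le_trans h2.le ha1.le
      refine ⟨?_, hx0, hx1⟩
      rw [if_pos h2]
      constructor
      · have := hmono₁ hgmem ⟨hx0, h2.le⟩ h1
        rwa [hgf] at this
      · have := hmono₁.monotoneOn ⟨hx0, h2.le⟩ ⟨ha0.le, le_refl a⟩ h2.le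
        rwa [hf₁a] at this
  -- measure computation
  have hmeq := congrArg (fun μ : Measure ℝ => μ (Ioc b 1)) hpres
  beta_reduce at hmeq
  rw [Measure.map_apply_of_aemeasurable hTmeas measurableSet_Ioc] at hmeq
  rw [Measure.restrict_apply' measurableSet_Icc,
      Measure.restrict_apply' measurableSet_Icc] at hmeq
  rw [hset] at hmeq
  have hIoc : Ioc b 1 ∩ Icc (0:ℝ) 1 = Ioc b 1 := by
    apply inter_eq_self_of_subset_left
    exact fun y hy => ⟨le_trans hbmem.1 hy.1.le, hy.2⟩
  rw [hIoc, Real.volume_Ioo, Real.volume_Ioc] at hmeq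
  rw [ENNReal.ofReal_eq_ofReal_iff (by linarith) (by linarith)] at hmeq
  linarith
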